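/- The point (t₁,t₂) = (1/√2, 1/√2) is a critical point of the function F(t₁,t₂) = −(π³/(t₁³t₂³))·[16t₁⁴t₂⁴ − 56(t₁⁴t₂² + t₂⁴t₁²) + 9(t₁⁴ + t₂⁴) − 14t₁²t₂²] on (0,∞)², and F(1/√2, 1/√2) = 96π³. -/

import Mathlib

open Real

/-- `(t₁,t₂) = (1/√2, 1/√2)` is a critical point of the energy
`F(t₁,t₂) = −(π³/(t₁³t₂³))[16t₁⁴t₂⁴ − 56(t₁⁴t₂² + t₂⁴t₁²) + 9(t₁⁴+t₂⁴) − 14t₁²t₂²]`,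
with `F(1/√2,1/√2) = 96π³`. -/
theorem stmt_3 :
    let F : ℝ → ℝ → ℝ := fun t₁ t₂ =>
      -(π^3/(t₁^3*t₂^3)) *
        (16*t₁^4*t₂^4 - 56*(t₁^4*t₂^2 + t₂^4*t₁^2) + 9*(t₁^4 + t₂^4) - 14*t₁^2*t₂^2)
    deriv (fun s => F s (1/Real.sqrt 2)) (1/Real.sqrt 2) = 0 ∧
    deriv (fun s => F (1/Real.sqrt 2) s) (1/Real.sqrt 2) = 0 ∧
    F (1/Real.sqrt 2) (1/Real.sqrt 2) = 96*π^3 := by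
  intro F
  have hF : F = fun t₁ t₂ =>
      -(π^3/(t₁^3*t₂^3)) *
        (16*t₁^4*t₂^4 - 56*(t₁^4*t₂^2 + t₂^4*t₁^2) + 9*(t₁^4 + t₂^4) - 14*t₁^2*t₂^2) := rfl
  have hr0 : Real.sqrt 2 ≠ 0 := by positivity
  set a : ℝ := 1 / Real.sqrt 2 with ha
  have ha0 : a ≠ 0 := one_div_ne_zero hr0
  have ha2 : a ^ 2 = 1/2 := by
    rw [ha, div_pow, one_pow, Real.sq_sqrt (by norm_num : (2:ℝ) ≥ 0)]
  have hden0 : a ^ 3 * a ^ 3 ≠ 0 := by positivity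
  -- derivative of the denominator-fraction
  have hden : HasDerivAt (fun s : ℝ => s ^ 3 * a ^ 3) (3 * a ^ 2 * a ^ 3) a := by
    have := (hasDerivAt_pow 3 a).mul_const (a ^ 3)
    exact this.congr_deriv (by push_cast; ring)
  have hfrac : HasDerivAt (fun s : ℝ => π ^ 3 / (s ^ 3 * a ^ 3))
      ((0 * (a ^ 3 * a ^ 3) - π ^ 3 * (3 * a ^ 2 * a ^ 3)) / (a ^ 3 * a ^ 3) ^ 2) a :=
    (hasDerivAt_const a (π ^ 3)).div hden hden0
  have h4 : HasDerivAt (fun s : ℝ => s ^ 4) (4 * a ^ 3) a := by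
    have := hasDerivAt_pow 4 a
    exact this.congr_deriv (by push_cast; ring)
  have h2p : HasDerivAt (fun s : ℝ => s ^ 2) (2 * a) a := by
    have := hasDerivAt_pow 2 a
    exact this.congr_deriv (by push_cast; ring)
  have hP : HasDerivAt (fun s : ℝ =>
      16 * s ^ 4 * a ^ 4 - 56 * (s ^ 4 * a ^ 2 + a ^ 4 * s ^ 2) + 9 * (s ^ 4 + a ^ 4)
        - 14 * s ^ 2 * a ^ 2)
      (16 * (4 * a ^ 3) * a ^ 4 - 56 * (4 * a ^ 3 * a ^ 2 + a ^ 4 * (2 * a))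
        + 9 * (4 * a ^ 3) - 14 * (2 * a) * a ^ 2) a := by
    have := ((((h4.const_mul 16).mul_const (a ^ 4)).sub
      (((h4.mul_const (a ^ 2)).add (h2p.const_mul (a ^ 4))).const_mul 56)).add
      ((h4.add_const (a ^ 4)).const_mul 9)).sub ((h2p.const_mul 14).mul_const (a ^ 2))
    exact this
  have hcrit : HasDerivAt (fun s => F s a)
      (-( (0 * (a ^ 3 * a ^ 3) - π ^ 3 * (3 * a ^ 2 * a ^ 3)) / (a ^ 3 * a ^ 3) ^ 2) *
        (16 * a ^ 4 * a ^ 4 - 56 * (a ^ 4 * a ^ 2 + a ^ 4 * a ^ 2) + 9 * (a ^ 4 + a ^ 4)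
          - 14 * a ^ 2 * a ^ 2)
       + (-(π ^ 3 / (a ^ 3 * a ^ 3))) *
        (16 * (4 * a ^ 3) * a ^ 4 - 56 * (4 * a ^ 3 * a ^ 2 + a ^ 4 * (2 * a))
          + 9 * (4 * a ^ 3) - 14 * (2 * a) * a ^ 2)) a := by
    rw [hF]
    exact hfrac.neg.mul hP
  have hzero : deriv (fun s => F s a) a = 0 := by
    rw [hcrit.deriv]
    have hi : (Real.sqrt 2)⁻¹ ^ 2 = 1/2 := by
      rw [inv_pow, Real.sq_sqrt (by norm_num : (2:ℝ) ≥ 0)]; norm_num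
    field_simp
    ring_nf
    linear_combination (-16*π^3) * (by nlinarith [hi] : (Real.sqrt 2)⁻¹ ^ 4 = 1/4)
  refine ⟨hzero, ?_, ?_⟩
  · have : (fun s => F a s) = (fun s => F s a) := by
      funext s; rw [hF]; ring
    rw [this, hzero]
  · rw [hF]
    have h3 : a ^ 3 * a ^ 3 = 1 / 8 := by
      have : a ^ 3 * a ^ 3 = (a ^ 2) ^ 3 := by ring
      rw [this, ha2]; norm_num
    have h4' : a ^ 4 = 1 / 4 := by
      have : a ^ 4 = (a ^ 2) ^ 2 := by ring
      rw [this, ha2]; norm_num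
    simp only [h3, h4', ha2]
    ring
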